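/- Let ν be a Radon measure on (0,∞) such that ∫_{(0,∞)} vol_N(L_t(f)) dν(t) < +∞ for every f ∈ C^N, and let μ(f) = ∫_{(0,∞)} vol_N(L_t(f)) dν(t). Then μ is continuous (i.e. μ(f_i) → μ(f) for every monotone sequence f_i in C^N converging pointwise to f ∈ C^N) if and only if ν is non-atomic, i.e. ν({t}) = 0 for every t > 0. -/

import Mathlib

open Filter Topology MeasureTheory
open scoped Classical ENNReal

noncomputable section

/-- A function `f : ℝ^N → ℝ` is quasi-concave if it is nonnegative and all its
superlevel sets `{x | t ≤ f x}` for `t > 0` are empty or compact and convex. -/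
def QuasiConcave {N : ℕ} (f : EuclideanSpace ℝ (Fin N) → ℝ) : Prop :=
  (∀ x, 0 ≤ f x) ∧
  ∀ t : ℝ, 0 < t →
    {x | t ≤ f x} = ∅ ∨ (IsCompact {x | t ≤ f x} ∧ Convex ℝ {x | t ≤ f x})

/-- `μ` is a valuation on `C^N`: it vanishes on the zero function and satisfies
the inclusion-exclusion property with respect to pointwise max and min. -/
def IsValuation {N : ℕ} (μ : (EuclideanSpace ℝ (Fin N) → ℝ) → ℝ) : Prop :=
  μ (fun _ => 0) = 0 ∧
  ∀ f g : EuclideanSpace ℝ (Fin N) → ℝ,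
    QuasiConcave f → QuasiConcave g →
    QuasiConcave (fun x => max (f x) (g x)) →
    μ (fun x => max (f x) (g x)) + μ (fun x => min (f x) (g x)) = μ f + μ g

/-- `μ` is invariant under rigid motions (isometries) of `ℝ^N`. -/
def IsInvariantVal {N : ℕ} (μ : (EuclideanSpace ℝ (Fin N) → ℝ) → ℝ) : Prop :=
  ∀ (T : EuclideanSpace ℝ (Fin N) ≃ᵢ EuclideanSpace ℝ (Fin N))
    (f : EuclideanSpace ℝ (Fin N) → ℝ), QuasiConcave f →
    μ (fun x => f (T x)) = μ f

/-- `μ` is continuous: it preserves limits of monotone pointwise convergent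
sequences of quasi-concave functions. -/
def IsContinuousVal {N : ℕ} (μ : (EuclideanSpace ℝ (Fin N) → ℝ) → ℝ) : Prop :=
  ∀ (fi : ℕ → EuclideanSpace ℝ (Fin N) → ℝ) (f : EuclideanSpace ℝ (Fin N) → ℝ),
    (∀ i, QuasiConcave (fi i)) → QuasiConcave f →
    (Monotone fi ∨ Antitone fi) →
    (∀ x, Tendsto (fun i => fi i x) atTop (𝓝 (f x))) →
    Tendsto (fun i => μ (fi i)) atTop (𝓝 (μ f))

/-- `μ` is simple: it vanishes on quasi-concave functions which are zero a.e. -/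
def IsSimpleVal {N : ℕ} (μ : (EuclideanSpace ℝ (Fin N) → ℝ) → ℝ) : Prop :=
  ∀ f : EuclideanSpace ℝ (Fin N) → ℝ, QuasiConcave f →
    (∀ᵐ x : EuclideanSpace ℝ (Fin N), f x = 0) → μ f = 0

/-- `μ` is monotone increasing: `f ≤ g` pointwise implies `μ f ≤ μ g`. -/
def IsMonotoneVal {N : ℕ} (μ : (EuclideanSpace ℝ (Fin N) → ℝ) → ℝ) : Prop :=
  ∀ f g : EuclideanSpace ℝ (Fin N) → ℝ, QuasiConcave f → QuasiConcave g →
    (∀ x, f x ≤ g x) → μ f ≤ μ g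

/-- the closed unit ball -/
def eucK (N : ℕ) : Set (EuclideanSpace ℝ (Fin N)) := Metric.closedBall 0 1

lemma levelset_indicator {N : ℕ} (c t : ℝ) (ht : 0 < t) :
    {x : EuclideanSpace ℝ (Fin N) | t ≤ (if x ∈ eucK N then c else 0)} =
      if t ≤ c then eucK N else ∅ := by
  ext x
  by_cases htc : t ≤ c
  · simp only [if_pos htc, Set.mem_setOf_eq]
    constructor
    · intro h
      by_contra hx
      rw [if_neg hx] at h
      linarith
    · intro hx
      rw [if_pos hx]
      exact htc
  · simp only [if_neg htc, Set.mem_setOf_eq, Set.mem_empty_iff_false, iff_false]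
    intro h
    by_cases hx : x ∈ eucK N
    · rw [if_pos hx] at h; exact htc h
    · rw [if_neg hx] at h; linarith

lemma quasiConcave_indicator {N : ℕ} (c : ℝ) (hc : 0 ≤ c) :
    QuasiConcave (fun x => if x ∈ eucK N then c else 0) := by
  constructor
  · intro x
    dsimp only
    split_ifs <;> simp [hc]
  · intro t ht
    rw [levelset_indicator c t ht]
    split_ifs
    · exact Or.inr ⟨isCompact_closedBall _ _, convex_closedBall _ _⟩
    · exact Or.inl rfl

lemma mu_indicator {N : ℕ} (ν : Measure ℝ) (c : ℝ) :
    (∫⁻ t in Set.Ioi (0:ℝ),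
        volume {x : EuclideanSpace ℝ (Fin N) | t ≤ (if x ∈ eucK N then c else 0)} ∂ν)
      = volume (eucK N) * ν (Set.Ioc 0 c) := by
  have h1 : ∀ᵐ t ∂ν, t ∈ Set.Ioi (0:ℝ) →
      volume {x : EuclideanSpace ℝ (Fin N) | t ≤ (if x ∈ eucK N then c else 0)}
        = Set.indicator (Set.Iic c) (fun _ => volume (eucK N)) t := by
    refine ae_of_all _ fun t ht => ?_
    rw [levelset_indicator c t ht]
    by_cases h : t ≤ c
    · simp [h, Set.indicator_of_mem, Set.mem_Iic]
    · simp [h, Set.indicator_of_notMem, Set.mem_Iic]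
  rw [setLIntegral_congr_fun_ae measurableSet_Ioi h1,
    lintegral_indicator measurableSet_Iic, setLIntegral_const,
    Measure.restrict_apply measurableSet_Iic, Set.inter_comm, Set.Ioi_inter_Iic]

theorem integral_valuation_continuous_iff_nonatomic' {N : ℕ} (ν : Measure ℝ)
    (hsupp : ν (Set.Iic 0) = 0)
    (hRadon : ∀ K : Set ℝ, IsCompact K → K ⊆ Set.Ioi 0 → ν K ≠ ⊤)
    (hfin : ∀ f : EuclideanSpace ℝ (Fin N) → ℝ, QuasiConcave f →
      (∫⁻ t in Set.Ioi (0:ℝ), volume {x | t ≤ f x} ∂ν) ≠ ⊤) :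
    (∀ (fi : ℕ → EuclideanSpace ℝ (Fin N) → ℝ) (f : EuclideanSpace ℝ (Fin N) → ℝ),
      (∀ i, QuasiConcave (fi i)) → QuasiConcave f →
      (Monotone fi ∨ Antitone fi) →
      (∀ x, Tendsto (fun i => fi i x) atTop (𝓝 (f x))) →
      Tendsto (fun i => (∫⁻ t in Set.Ioi (0:ℝ), volume {x | t ≤ fi i x} ∂ν).toReal) atTop
        (𝓝 ((∫⁻ t in Set.Ioi (0:ℝ), volume {x | t ≤ f x} ∂ν).toReal))) ↔
    ∀ t : ℝ, 0 < t → ν {t} = 0 := by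
  have hKvol_pos : 0 < volume (eucK N) :=
    lt_of_lt_of_le (Metric.measure_ball_pos volume 0 one_pos)
      (measure_mono Metric.ball_subset_closedBall)
  have hKvol_fin : volume (eucK N) ≠ ⊤ := (isCompact_closedBall _ _).measure_lt_top.ne
  constructor
  · -- continuity implies non-atomic
    intro hcont t₀ ht₀
    set c : ℕ → ℝ := fun i => t₀ - t₀ / (i + 1) with hc_def
    have hpos : ∀ i : ℕ, (0:ℝ) < (i:ℝ) + 1 := fun i => by positivity
    have hc_nonneg : ∀ i, 0 ≤ c i := by
      intro i
      have : t₀ / ((i:ℝ) + 1) ≤ t₀ / 1 := by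
        apply div_le_div_of_nonneg_left ht₀.le one_pos
        linarith [Nat.cast_nonneg (α := ℝ) i]
      simp only [hc_def]
      rw [div_one] at this
      linarith
    have hc_lt : ∀ i, c i < t₀ := by
      intro i
      have : 0 < t₀ / ((i:ℝ) + 1) := div_pos ht₀ (hpos i)
      simp only [hc_def]; linarith
    have hc_mono : Monotone c := by
      intro i j hij
      simp only [hc_def]
      have : t₀ / ((j:ℝ) + 1) ≤ t₀ / ((i:ℝ) + 1) := by
        apply div_le_div_of_nonneg_left ht₀.le (hpos i)
        exact_mod_cast by exact_mod_cast add_le_add_left (Nat.cast_le.2 hij) 1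
      linarith
    have hc_tendsto : Tendsto c atTop (𝓝 t₀) := by
      have h1 : Tendsto (fun i : ℕ => (i:ℝ) + 1) atTop atTop :=
        tendsto_atTop_add_const_right _ 1 tendsto_natCast_atTop_atTop
      have h2 : Tendsto (fun i : ℕ => t₀ / ((i:ℝ) + 1)) atTop (𝓝 0) :=
        Tendsto.div_atTop tendsto_const_nhds h1
      have := h2.const_sub t₀
      simpa using this
    set fi : ℕ → EuclideanSpace ℝ (Fin N) → ℝ :=
      fun i x => if x ∈ eucK N then c i else 0 with hfi_def
    set f : EuclideanSpace ℝ (Fin N) → ℝ :=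
      fun x => if x ∈ eucK N then t₀ else 0 with hf_def
    have hq : QuasiConcave f := quasiConcave_indicator t₀ ht₀.le
    have htend := hcont fi f (fun i => quasiConcave_indicator (c i) (hc_nonneg i)) hq
      (Or.inl (by
        intro i j hij x
        simp only [hfi_def]
        split_ifs
        · exact hc_mono hij
        · exact le_refl 0))
      (by
        intro x
        by_cases hx : x ∈ eucK N
        · simpa only [hfi_def, hf_def, if_pos hx] using hc_tendsto
        · simp only [hfi_def, hf_def, if_neg hx]
          exact tendsto_const_nhds)
    have hrw : ∀ i, (∫⁻ t in Set.Ioi (0:ℝ), volume {x | t ≤ fi i x} ∂ν)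
        = volume (eucK N) * ν (Set.Ioc 0 (c i)) := fun i => mu_indicator ν (c i)
    have hrwf : (∫⁻ t in Set.Ioi (0:ℝ), volume {x | t ≤ f x} ∂ν)
        = volume (eucK N) * ν (Set.Ioc 0 t₀) := mu_indicator ν t₀
    -- finiteness
    have hIoc_fin : ν (Set.Ioc 0 t₀) ≠ ⊤ := by
      intro h
      apply hfin f hq
      rw [hrwf, h, ENNReal.mul_top hKvol_pos.ne']
    have hIoo_fin : ν (Set.Ioo 0 t₀) ≠ ⊤ :=
      fun h => hIoc_fin (top_le_iff.1 (h ▸ measure_mono Set.Ioo_subset_Ioc_self))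
    -- the other limit
    have hU : (⋃ i, Set.Ioc (0:ℝ) (c i)) = Set.Ioo 0 t₀ := by
      ext t
      simp only [Set.mem_iUnion, Set.mem_Ioc, Set.mem_Ioo]
      constructor
      · rintro ⟨i, h1, h2⟩
        exact ⟨h1, lt_of_le_of_lt h2 (hc_lt i)⟩
      · rintro ⟨h1, h2⟩
        obtain ⟨i, hi⟩ := (hc_tendsto.eventually (eventually_gt_nhds h2)).exists
        exact ⟨i, h1, hi.le⟩
    have hmono_sets : Monotone (fun i => Set.Ioc (0:ℝ) (c i)) :=
      fun i j hij => Set.Ioc_subset_Ioc_right (hc_mono hij)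
    have hsup : ν (Set.Ioo 0 t₀) = ⨆ i, ν (Set.Ioc 0 (c i)) := by
      rw [← hU]; exact hmono_sets.measure_iUnion
    have htend2 : Tendsto (fun i => volume (eucK N) * ν (Set.Ioc 0 (c i))) atTop
        (𝓝 (volume (eucK N) * ν (Set.Ioo 0 t₀))) := by
      rw [hsup]
      exact ENNReal.Tendsto.const_mul
        (tendsto_atTop_iSup (fun i j hij => measure_mono (hmono_sets hij)))
        (Or.inr hKvol_fin)
    have hfin2 : volume (eucK N) * ν (Set.Ioo 0 t₀) ≠ ⊤ :=
      ENNReal.mul_ne_top hKvol_fin hIoo_fin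
    have htend2' : Tendsto (fun i => (volume (eucK N) * ν (Set.Ioc 0 (c i))).toReal) atTop
        (𝓝 ((volume (eucK N) * ν (Set.Ioo 0 t₀)).toReal)) :=
      (ENNReal.tendsto_toReal hfin2).comp htend2
    have htend1 : Tendsto (fun i => (volume (eucK N) * ν (Set.Ioc 0 (c i))).toReal) atTop
        (𝓝 ((volume (eucK N) * ν (Set.Ioc 0 t₀)).toReal)) := by
      have := htend
      simp only [hrw, hrwf] at this
      exact this
    have heqR := tendsto_nhds_unique htend2' htend1
    have hfin1 : volume (eucK N) * ν (Set.Ioc 0 t₀) ≠ ⊤ :=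
      ENNReal.mul_ne_top hKvol_fin hIoc_fin
    have heq : volume (eucK N) * ν (Set.Ioo 0 t₀) = volume (eucK N) * ν (Set.Ioc 0 t₀) :=
      (ENNReal.toReal_eq_toReal_iff' hfin2 hfin1).1 heqR
    have heqν : ν (Set.Ioo 0 t₀) = ν (Set.Ioc 0 t₀) :=
      le_antisymm (measure_mono Set.Ioo_subset_Ioc_self)
        ((ENNReal.mul_le_mul_iff_right hKvol_pos.ne' hKvol_fin).1 heq.ge)
    have : ν {t₀} = ν (Set.Ioc 0 t₀) - ν (Set.Ioo 0 t₀) := by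
      rw [← Set.Ioc_sdiff_Ioo_same ht₀,
        measure_diff Set.Ioo_subset_Ioc_self measurableSet_Ioo.nullMeasurableSet hIoo_fin]
    rw [this, ← heqν, tsub_self]
  · -- non-atomic implies continuity
    intro hna fi f hqi hq hmono hlim
    have hatom : ∀ t : ℝ, ν {t} = 0 := by
      intro t
      rcases lt_or_ge 0 t with h | h
      · exact hna t h
      · exact measure_mono_null (by simpa using h) hsupp
    haveI : NullSingletonClass ν := ⟨hatom⟩
    have hmeas : ∀ g : EuclideanSpace ℝ (Fin N) → ℝ,
        Measurable (fun t : ℝ => volume {x | t ≤ g x}) := by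
      intro g
      have : Antitone (fun t : ℝ => volume {x | t ≤ g x}) :=
        fun a b hab => measure_mono fun x hx => hab.trans hx
      exact this.measurable
    rcases hmono with hM | hA
    · -- increasing case
      have hle : ∀ i x, fi i x ≤ f x := by
        intro i x
        exact ge_of_tendsto (hlim x) (eventually_atTop.2 ⟨i, fun j hj => hM hj x⟩)
      have hmono_sets : ∀ t : ℝ, Monotone (fun i => {x | t ≤ fi i x}) :=
        fun t i j hij x hx => hx.trans (hM hij x)
      set φ : ℝ → ℝ≥0∞ := fun t => volume {x | t ≤ f x} with hφ_def
      have hφ_anti : Antitone φ := fun a b hab => measure_mono fun x hx => hab.trans hx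
      -- pointwise: sup of level measures between open and closed level measure
      have hUa : ∀ t : ℝ, (⋃ i, {x | t ≤ fi i x}) ⊆ {x | t ≤ f x} := by
        intro t x hx
        obtain ⟨i, hi⟩ := Set.mem_iUnion.1 hx
        exact hi.trans (hle i x)
      have hUb : ∀ t : ℝ, {x | t < f x} ⊆ ⋃ i, {x | t ≤ fi i x} := by
        intro t x hx
        obtain ⟨i, hi⟩ := ((hlim x).eventually (eventually_gt_nhds hx)).exists
        exact Set.mem_iUnion.2 ⟨i, hi.le⟩
      -- where φ is continuous, the open and closed level sets have equal measure
      have hψφ : ∀ t : ℝ, ContinuousAt φ t → volume {x | t < f x} = φ t := by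
        intro t hcont
        have hseq : Tendsto (fun n : ℕ => t + 1 / ((n:ℝ) + 1)) atTop (𝓝 t) := by
          have h1 : Tendsto (fun n : ℕ => (n:ℝ) + 1) atTop atTop :=
            tendsto_atTop_add_const_right _ 1 tendsto_natCast_atTop_atTop
          have h2 : Tendsto (fun n : ℕ => 1 / ((n:ℝ) + 1)) atTop (𝓝 0) :=
            Tendsto.div_atTop tendsto_const_nhds h1
          simpa using (tendsto_const_nhds (x := t)).add h2
        have hsets : Monotone (fun n : ℕ => {x | t + 1 / ((n:ℝ) + 1) ≤ f x}) := by
          intro n m hnm x hx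
          refine le_trans (add_le_add_right ?_ t) hx
          apply div_le_div_of_nonneg_left one_pos.le (by positivity)
          exact_mod_cast add_le_add_left (Nat.cast_le.2 hnm) 1
        have hsetU : {x | t < f x} = ⋃ n : ℕ, {x | t + 1 / ((n:ℝ) + 1) ≤ f x} := by
          ext x
          simp only [Set.mem_setOf_eq, Set.mem_iUnion]
          constructor
          · intro h
            obtain ⟨n, hn⟩ := exists_nat_one_div_lt (sub_pos.2 h)
            exact ⟨n, by linarith⟩
          · rintro ⟨n, hn⟩
            have : (0:ℝ) < 1 / ((n:ℝ) + 1) := by positivity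
            linarith
        rw [hsetU, hsets.measure_iUnion]
        have hφseq : Tendsto (fun n : ℕ => φ (t + 1 / ((n:ℝ) + 1))) atTop (𝓝 (φ t)) :=
          (hcont.tendsto).comp hseq
        have hφmono : Monotone (fun n : ℕ => φ (t + 1 / ((n:ℝ) + 1))) := by
          intro n m hnm
          apply hφ_anti
          refine add_le_add_right ?_ t
          apply div_le_div_of_nonneg_left one_pos.le (by positivity)
          exact_mod_cast add_le_add_left (Nat.cast_le.2 hnm) 1
        exact tendsto_nhds_unique (tendsto_atTop_iSup hφmono) hφseq
      -- a.e. equality of the limit integrand with φ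
      have hae : ∀ᵐ t ∂ν, volume (⋃ i, {x | t ≤ fi i x}) = φ t := by
        have hcount : Set.Countable {t | ¬ContinuousAt φ t} :=
          hφ_anti.countable_not_continuousAt
        have : ∀ᵐ t ∂ν, ContinuousAt φ t := by
          rw [ae_iff]
          exact hcount.measure_zero ν
        filter_upwards [this] with t ht
        refine le_antisymm (measure_mono (hUa t)) ?_
        calc φ t = volume {x | t < f x} := (hψφ t ht).symm
          _ ≤ volume (⋃ i, {x | t ≤ fi i x}) := measure_mono (hUb t)
      have heq : (∫⁻ t in Set.Ioi (0:ℝ), φ t ∂ν)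
          = ⨆ i, ∫⁻ t in Set.Ioi (0:ℝ), volume {x | t ≤ fi i x} ∂ν := by
        rw [← lintegral_iSup (fun i => hmeas (fi i))
          (fun i j hij t => measure_mono (hmono_sets t hij))]
        refine lintegral_congr_ae ?_
        have h1 : ∀ t : ℝ, (⨆ i, volume {x | t ≤ fi i x}) = volume (⋃ i, {x | t ≤ fi i x}) :=
          fun t => ((hmono_sets t).measure_iUnion).symm
        have h2 : ∀ᵐ t ∂ν.restrict (Set.Ioi 0), volume (⋃ i, {x | t ≤ fi i x}) = φ t :=
          ae_restrict_of_ae hae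
        filter_upwards [h2] with t ht
        rw [← ht, h1 t]
      have htendE : Tendsto (fun i => ∫⁻ t in Set.Ioi (0:ℝ), volume {x | t ≤ fi i x} ∂ν) atTop
          (𝓝 (∫⁻ t in Set.Ioi (0:ℝ), φ t ∂ν)) := by
        rw [heq]
        exact tendsto_atTop_iSup
          (fun i j hij => lintegral_mono fun t => measure_mono (hmono_sets t hij))
      exact (ENNReal.tendsto_toReal (hfin f hq)).comp htendE
    · -- decreasing case
      have hle : ∀ i x, f x ≤ fi i x := by
        intro i x
        exact le_of_tendsto (hlim x) (eventually_atTop.2 ⟨i, fun j hj => hA hj x⟩)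
      have hanti_sets : ∀ t : ℝ, Antitone (fun i => {x | t ≤ fi i x}) :=
        fun t i j hij x hx => hx.trans (hA hij x)
      have key : ∀ t ∈ Set.Ioi (0:ℝ),
          volume {x | t ≤ f x} = ⨅ i, volume {x | t ≤ fi i x} := by
        intro t ht
        have hset : {x | t ≤ f x} = ⋂ i, {x | t ≤ fi i x} := by
          ext x
          simp only [Set.mem_iInter, Set.mem_setOf_eq]
          constructor
          · intro h i
            exact h.trans (hle i x)
          · intro h
            exact ge_of_tendsto (hlim x) (Eventually.of_forall h)
        rw [hset]
        refine Directed.measure_iInter (fun i => ?_) ?_ ⟨0, ?_⟩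
        · rcases (hqi i).2 t ht with h | h
          · rw [h]; exact MeasurableSet.empty.nullMeasurableSet
          · exact h.1.isClosed.measurableSet.nullMeasurableSet
        · intro i j
          exact ⟨max i j, hanti_sets t (le_max_left i j), hanti_sets t (le_max_right i j)⟩
        · rcases (hqi 0).2 t ht with h | h
          · rw [h]; simp
          · exact h.1.measure_lt_top.ne
      have heq : (∫⁻ t in Set.Ioi (0:ℝ), volume {x | t ≤ f x} ∂ν)
          = ⨅ i, ∫⁻ t in Set.Ioi (0:ℝ), volume {x | t ≤ fi i x} ∂ν := by
        rw [setLIntegral_congr_fun_ae measurableSet_Ioi (ae_of_all _ key)]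
        exact lintegral_iInf (fun i => hmeas (fi i))
          (fun i j hij t => measure_mono (hanti_sets t hij)) (hfin (fi 0) (hqi 0))
      have htendE : Tendsto (fun i => ∫⁻ t in Set.Ioi (0:ℝ), volume {x | t ≤ fi i x} ∂ν) atTop
          (𝓝 (∫⁻ t in Set.Ioi (0:ℝ), volume {x | t ≤ f x} ∂ν)) := by
        rw [heq]
        exact tendsto_atTop_iInf
          (fun i j hij => lintegral_mono fun t => measure_mono (hanti_sets t hij))
      exact (ENNReal.tendsto_toReal (hfin f hq)).comp htendE

/-- Let `ν` be a Radon measure on `(0,∞)` with `∫_{(0,∞)} vol_N(L_t(f)) dν(t)` finite for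
every quasi-concave `f`, and let `μ(f) = ∫_{(0,∞)} vol_N(L_t(f)) dν(t)`. Then `μ` is
continuous if and only if `ν` is non-atomic. -/
theorem integral_valuation_continuous_iff_nonatomic {N : ℕ} (ν : Measure ℝ)
    (hsupp : ν (Set.Iic 0) = 0)
    (hRadon : ∀ K : Set ℝ, IsCompact K → K ⊆ Set.Ioi 0 → ν K ≠ ⊤)
    (hfin : ∀ f : EuclideanSpace ℝ (Fin N) → ℝ, QuasiConcave f →
      (∫⁻ t in Set.Ioi (0:ℝ), volume {x | t ≤ f x} ∂ν) ≠ ⊤) :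
    IsContinuousVal (N := N)
      (fun f => (∫⁻ t in Set.Ioi (0:ℝ), volume {x | t ≤ f x} ∂ν).toReal) ↔
    ∀ t : ℝ, 0 < t → ν {t} = 0 :=
  integral_valuation_continuous_iff_nonatomic' ν hsupp hRadon hfin

end
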